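/- A function h ∈ F(S¹) is an extreme point of F(S¹) — i.e., h is not the midpoint (f+g)/2 of any two distinct functions f, g ∈ F(S¹) — if and only if for almost every x ∈ [0,π] (with respect to Lebesgue measure), h is differentiable at x with |h′(x)| = 1. -/

import Mathlib

open MeasureTheory

/-- `F(S¹)`: 1-Lipschitz functions on `[0,π]` with `f 0 + f π = π` (represented by
functions `ℝ → ℝ`, with all conditions imposed on `[0,π]`). -/
def FS1 : Set (ℝ → ℝ) :=
  {f | LipschitzOnWith 1 f (Set.Icc 0 Real.pi) ∧ f 0 + f Real.pi = Real.pi}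

open intervalIntegral


/-- FTC for Lipschitz functions, via dominated convergence of difference quotients. -/
lemma lipschitz_ftc {f : ℝ → ℝ} {K : NNReal} (hf : LipschitzWith K f) {a b : ℝ} (hab : a ≤ b) :
    ∫ x in a..b, deriv f x = f b - f a := by
  set δ : ℕ → ℝ := fun n => ((n : ℝ) + 1)⁻¹ with hδ
  have hδpos : ∀ n, 0 < δ n := fun n => by positivity
  have hδ0 : Filter.Tendsto δ Filter.atTop (nhds 0) := by
    simpa [one_div] using tendsto_one_div_add_atTop_nhds_zero_nat (𝕜 := ℝ)
  set g : ℕ → ℝ → ℝ := fun n x => (f (x + δ n) - f x) / δ n with hg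
  have hcont : Continuous f := hf.continuous
  have hint : ∀ c d : ℝ, IntervalIntegrable f volume c d := fun c d =>
    hcont.intervalIntegrable c d
  have hae : ∀ᵐ x ∂(volume.restrict (Set.Ioc a b)),
      Filter.Tendsto (fun n => g n x) Filter.atTop (nhds (deriv f x)) := by
    refine ae_restrict_of_ae ?_
    filter_upwards [hf.ae_differentiableAt] with x hx
    have hd : HasDerivAt f (deriv f x) x := hx.hasDerivAt
    have hslope := hasDerivAt_iff_tendsto_slope.mp hd
    have hseq : Filter.Tendsto (fun n => x + δ n) Filter.atTop (nhdsWithin x {x}ᶜ) := by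
      rw [tendsto_nhdsWithin_iff]
      constructor
      · simpa using (tendsto_const_nhds.add hδ0)
      · exact Filter.Eventually.of_forall fun n => by
          simp [ne_of_gt, (hδpos n).ne']
    have := hslope.comp hseq
    convert this using 2 with n
    simp only [hg, Function.comp, slope, vsub_eq_sub, add_sub_cancel_left]
    exact div_eq_inv_mul _ _
  have hbound : ∀ n, ∀ᵐ x ∂(volume.restrict (Set.Ioc a b)), ‖g n x‖ ≤ (K : ℝ) := by
    intro n
    refine Filter.Eventually.of_forall fun x => ?_
    have h1 : |f (x + δ n) - f x| ≤ K * |x + δ n - x| := by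
      simpa [Real.dist_eq] using hf.dist_le_mul (x + δ n) x
    rw [hg, Real.norm_eq_abs, abs_div, abs_of_pos (hδpos n)]
    rw [div_le_iff₀ (hδpos n)]
    simpa [add_sub_cancel_left, abs_of_pos (hδpos n)] using h1
  have hmeasg : ∀ n, AEStronglyMeasurable (g n) (volume.restrict (Set.Ioc a b)) :=
    fun n => ((hcont.comp (continuous_id.add continuous_const)).sub hcont).div_const _
      |>.aestronglyMeasurable.restrict
  have hintK : Integrable (fun _ : ℝ => (K : ℝ)) (volume.restrict (Set.Ioc a b)) := by
    exact integrable_const _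
  have hDCT := tendsto_integral_of_dominated_convergence (fun _ => (K : ℝ))
      hmeasg hintK hbound hae
  have hgint : ∀ n, ∫ x in Set.Ioc a b, g n x ∂volume =
      ((∫ x in b..(b + δ n), f x) - ∫ x in a..(a + δ n), f x) / δ n := by
    intro n
    have h1 : ∫ x in Set.Ioc a b, g n x ∂volume = ∫ x in a..b, g n x :=
      (intervalIntegral.integral_of_le hab).symm
    rw [h1, hg]
    simp only []
    rw [intervalIntegral.integral_div]
    congr 1
    have hc2 : Continuous fun x : ℝ => f (x + δ n) := by fun_prop
    rw [intervalIntegral.integral_sub (hc2.intervalIntegrable a b) (hint a b)]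
    have h2 : ∫ x in a..b, f (x + δ n) = ∫ x in (a + δ n)..(b + δ n), f x := by
      simpa using (intervalIntegral.integral_comp_add_right (a := a) (b := b) f (δ n)).symm
    rw [h2]
    have h3 : ∫ x in (a + δ n)..(b + δ n), f x =
        (∫ x in (a + δ n)..b, f x) + ∫ x in b..(b + δ n), f x :=
      (intervalIntegral.integral_add_adjacent_intervals (hint _ _) (hint _ _)).symm
    have h4 : ∫ x in a..b, f x = (∫ x in a..(a + δ n), f x) + ∫ x in (a + δ n)..b, f x :=
      (intervalIntegral.integral_add_adjacent_intervals (hint _ _) (hint _ _)).symm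
    rw [h3, h4]; ring
  have hlim : ∀ c : ℝ, Filter.Tendsto (fun n => (∫ x in c..(c + δ n), f x) / δ n)
      Filter.atTop (nhds (f c)) := by
    intro c
    have hF : HasDerivAt (fun u => ∫ x in c..u, f x) (f c) c :=
      intervalIntegral.integral_hasDerivAt_right (hint c c)
        (hcont.stronglyMeasurableAtFilter _ _) hcont.continuousAt
    have hslope := hasDerivAt_iff_tendsto_slope.mp hF
    have hseq : Filter.Tendsto (fun n => c + δ n) Filter.atTop (nhdsWithin c {c}ᶜ) := by
      rw [tendsto_nhdsWithin_iff]
      exact ⟨by simpa using (tendsto_const_nhds.add hδ0),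
        Filter.Eventually.of_forall fun n => by simp [(hδpos n).ne']⟩
    have := hslope.comp hseq
    convert this using 2 with n
    simp only [Function.comp, slope, vsub_eq_sub, add_sub_cancel_left,
      intervalIntegral.integral_same, sub_zero]
    exact div_eq_inv_mul _ _
  have hlim2 : Filter.Tendsto (fun n => ∫ x in Set.Ioc a b, g n x ∂volume)
      Filter.atTop (nhds (f b - f a)) := by
    simp only [hgint]
    have := (hlim b).sub (hlim a)
    convert this using 2 with n
    ring
  have := tendsto_nhds_unique hDCT hlim2
  rw [intervalIntegral.integral_of_le hab]
  exact this

lemma bdd_intervalIntegrable {v : ℝ → ℝ} (hv : Measurable v) {C : ℝ}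
    (hC : ∀ x, |v x| ≤ C) (a b : ℝ) : IntervalIntegrable v volume a b := by
  rw [intervalIntegrable_iff]
  refine Measure.integrableOn_of_bounded ?_ hv.aestronglyMeasurable
    (Filter.Eventually.of_forall fun x => hC x)
  rw [Set.uIoc_eq_union]
  exact ((measure_union_le _ _).trans_lt
    (ENNReal.add_lt_top.2 ⟨by simp [Real.volume_Ioc], by simp [Real.volume_Ioc]⟩)).ne

lemma ind_int {E : Set ℝ} (hE : MeasurableSet E) {a b : ℝ} (hab : a ≤ b) :
    ∫ t in a..b, E.indicator (fun _ => (1:ℝ)) t = (volume (E ∩ Set.Ioc a b)).toReal := by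
  rw [intervalIntegral.integral_of_le hab, MeasureTheory.integral_indicator hE]
  rw [Measure.restrict_restrict hE, setIntegral_const]
  simp
  rfl

lemma abs_half_eq {a b d : ℝ} (ha : |a| ≤ 1) (hb : |b| ≤ 1) (hd : |d| = 1)
    (heq : d = (a + b) / 2) : a = b := by
  rw [abs_le] at ha hb
  rcases (abs_eq (by norm_num : (0:ℝ) ≤ 1)).mp hd with h | h <;>
    (rw [h] at heq; linarith)

open Real Set in
theorem extremePoint_FS1_iff' (h : ℝ → ℝ)
    (hh : LipschitzOnWith 1 h (Set.Icc 0 Real.pi) ∧ h 0 + h Real.pi = Real.pi) :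
    (∀ f, (LipschitzOnWith 1 f (Set.Icc 0 Real.pi) ∧ f 0 + f Real.pi = Real.pi) →
     ∀ g, (LipschitzOnWith 1 g (Set.Icc 0 Real.pi) ∧ g 0 + g Real.pi = Real.pi) →
      (∀ x ∈ Set.Icc (0 : ℝ) Real.pi, h x = (f x + g x) / 2) →
      ∀ x ∈ Set.Icc (0 : ℝ) Real.pi, f x = g x) ↔
    (∀ᵐ x ∂volume, x ∈ Set.Icc (0 : ℝ) Real.pi →
      ∃ d : ℝ, HasDerivWithinAt h d (Set.Icc (0 : ℝ) Real.pi) x ∧ |d| = 1) := by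
  obtain ⟨hlip, hsum⟩ := hh
  obtain ⟨H, hH, hHeq⟩ := hlip.extend_real
  have pi_pos := Real.pi_pos
  have h0mem : (0:ℝ) ∈ Set.Icc (0:ℝ) Real.pi := ⟨le_refl _, pi_pos.le⟩
  have hπmem : Real.pi ∈ Set.Icc (0:ℝ) Real.pi := ⟨pi_pos.le, le_refl _⟩
  have hH1 : ∀ t, |deriv H t| ≤ 1 := fun t => by
    simpa using norm_deriv_le_of_lipschitz hH
  constructor
  · -- extreme point → a.e. |h'| = 1
    intro hext
    by_contra hc
    -- reduce to a positive measure set of interior points where H is diff with |H'| < 1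
    set B : Set ℝ := {t | t ∈ Set.Ioo (0:ℝ) Real.pi ∧
      ¬(DifferentiableAt ℝ H t ∧ |deriv H t| = 1)} with hBdef
    have hBne : volume B ≠ 0 := by
      intro h0
      apply hc
      have h0' : ∀ᵐ t : ℝ, t ∉ B := measure_eq_zero_iff_ae_notMem.mp h0
      have hne0 : ∀ᵐ t : ℝ, t ≠ (0:ℝ) := by
        rw [ae_iff]; simpa using Real.volume_singleton
      have hneπ : ∀ᵐ t : ℝ, t ≠ Real.pi := by
        rw [ae_iff]; simpa using Real.volume_singleton
      filter_upwards [h0', hne0, hneπ] with t htB ht0 htπ hticc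
      have htIoo : t ∈ Set.Ioo (0:ℝ) Real.pi :=
        ⟨lt_of_le_of_ne hticc.1 (Ne.symm ht0), lt_of_le_of_ne hticc.2 htπ⟩
      have hgood : DifferentiableAt ℝ H t ∧ |deriv H t| = 1 := by
        by_contra hbad
        exact htB ⟨htIoo, hbad⟩
      have hnhds : Set.Icc (0:ℝ) Real.pi ∈ nhds t := Icc_mem_nhds htIoo.1 htIoo.2
      have hev : H =ᶠ[nhds t] h := by
        filter_upwards [hnhds] with y hy
        exact (hHeq hy).symm
      exact ⟨deriv H t,
        ((hgood.1.hasDerivAt.congr_of_eventuallyEq hev.symm)).hasDerivWithinAt, hgood.2⟩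
    set A : Set ℝ := Set.Ioo (0:ℝ) Real.pi ∩ {t | DifferentiableAt ℝ H t} ∩
      {t | |deriv H t| < 1} with hAdef
    have hAmeas : MeasurableSet A :=
      (measurableSet_Ioo.inter (measurableSet_of_differentiableAt ℝ H)).inter
        (measurableSet_lt ((measurable_deriv H).abs) measurable_const)
    have hAne : volume A ≠ 0 := by
      intro h0
      apply hBne
      rw [measure_eq_zero_iff_ae_notMem]
      have h0' : ∀ᵐ t : ℝ, t ∉ A := measure_eq_zero_iff_ae_notMem.mp h0
      filter_upwards [h0', hH.ae_differentiableAt] with t htA htdiff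
      rintro ⟨htIoo, hbad⟩
      apply hbad
      refine ⟨htdiff, ?_⟩
      by_contra hne1
      exact htA ⟨⟨htIoo, htdiff⟩, lt_of_le_of_ne (hH1 t) hne1⟩
    -- find a uniform gap ε
    have hdecomp : A = ⋃ n : ℕ, A ∩ {t | |deriv H t| ≤ 1 - ((n:ℝ)+1)⁻¹} := by
      apply Set.Subset.antisymm
      · intro t ht
        obtain ⟨n, hn⟩ := exists_nat_one_div_lt (K := ℝ) (sub_pos.mpr ht.2)
        rw [one_div] at hn
        exact Set.mem_iUnion.mpr ⟨n, ht, by simp only [Set.mem_setOf_eq]; linarith⟩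
      · exact Set.iUnion_subset fun n => Set.inter_subset_left
    obtain ⟨n, hn⟩ : ∃ n : ℕ, volume (A ∩ {t | |deriv H t| ≤ 1 - ((n:ℝ)+1)⁻¹}) ≠ 0 := by
      by_contra hall
      push_neg at hall
      exact hAne (by rw [hdecomp]; exact measure_iUnion_null hall)
    set ε : ℝ := ((n:ℝ)+1)⁻¹ with hεdef
    have hε : 0 < ε := by positivity
    set E : Set ℝ := A ∩ {t | |deriv H t| ≤ 1 - ε} with hEdef
    have hEmeas : MeasurableSet E :=
      hAmeas.inter (measurableSet_le ((measurable_deriv H).abs) measurable_const)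
    have hE0 : volume E ≠ 0 := hn
    have hEsub : E ⊆ Set.Ioo (0:ℝ) Real.pi := fun t ht => ht.1.1.1
    have hEfin : volume E ≠ ⊤ := by
      refine ((measure_mono hEsub).trans_lt ?_).ne
      rw [Real.volume_Ioo]
      exact ENNReal.ofReal_lt_top
    set m : ℝ := (volume E).toReal with hmdef
    have hm : 0 < m := ENNReal.toReal_pos hE0 hEfin
    -- intermediate value to split E in half
    set φ : ℝ → ℝ := fun t => (volume (E ∩ Set.Iic t)).toReal with hφdef
    have hφfin : ∀ t, volume (E ∩ Set.Iic t) ≠ ⊤ :=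
      fun t => ((measure_mono Set.inter_subset_left).trans_lt hEfin.lt_top).ne
    have hφmono : ∀ s t : ℝ, s ≤ t →
        φ s ≤ φ t ∧ φ t ≤ φ s + (t - s) := by
      intro s t hst
      have hsplit : E ∩ Set.Iic t = (E ∩ Set.Iic s) ∪ (E ∩ Set.Ioc s t) := by
        ext x
        simp only [Set.mem_inter_iff, Set.mem_union, Set.mem_Iic, Set.mem_Ioc]
        constructor
        · rintro ⟨hxE, hxt⟩
          rcases le_or_gt x s with hxs | hxs
          · exact Or.inl ⟨hxE, hxs⟩
          · exact Or.inr ⟨hxE, hxs, hxt⟩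
        · rintro (⟨hxE, hxs⟩ | ⟨hxE, _, hxt⟩)
          · exact ⟨hxE, hxs.trans hst⟩
          · exact ⟨hxE, hxt⟩
      have hdisj : Disjoint (E ∩ Set.Iic s) (E ∩ Set.Ioc s t) := by
        refine Set.disjoint_left.mpr ?_
        rintro x ⟨_, hxs⟩ ⟨_, hxs', _⟩
        exact absurd hxs (not_le.mpr hxs')
      have hmeq : volume (E ∩ Set.Iic t) =
          volume (E ∩ Set.Iic s) + volume (E ∩ Set.Ioc s t) := by
        rw [hsplit, measure_union hdisj (hEmeas.inter measurableSet_Ioc)]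
      have hfin2 : volume (E ∩ Set.Ioc s t) ≠ ⊤ :=
        ((measure_mono Set.inter_subset_left).trans_lt hEfin.lt_top).ne
      have htr : φ t = φ s + (volume (E ∩ Set.Ioc s t)).toReal := by
        rw [hφdef]; simp only []
        rw [hmeq, ENNReal.toReal_add (hφfin s) hfin2]
      have hvol : (volume (E ∩ Set.Ioc s t)).toReal ≤ t - s := by
        have h1 : volume (E ∩ Set.Ioc s t) ≤ volume (Set.Ioc s t) :=
          measure_mono Set.inter_subset_right
        have h2 : (volume (Set.Ioc s t)).toReal = t - s := by
          rw [Real.volume_Ioc, ENNReal.toReal_ofReal (by linarith)]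
        calc (volume (E ∩ Set.Ioc s t)).toReal
            ≤ (volume (Set.Ioc s t)).toReal :=
              ENNReal.toReal_mono (by rw [Real.volume_Ioc]; exact ENNReal.ofReal_ne_top) h1
          _ = t - s := h2
      constructor
      · rw [htr]
        have : 0 ≤ (volume (E ∩ Set.Ioc s t)).toReal := ENNReal.toReal_nonneg
        linarith
      · rw [htr]
        linarith
    have hφlip : LipschitzWith 1 φ := by
      rw [lipschitzWith_iff_dist_le_mul]
      intro s t
      rw [Real.dist_eq, Real.dist_eq, NNReal.coe_one, one_mul]
      rcases le_total s t with hst | hst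
      · obtain ⟨hm1, hm2⟩ := hφmono s t hst
        rw [abs_sub_comm, abs_of_nonneg (by linarith), abs_of_nonpos (by linarith)]
        linarith
      · obtain ⟨hm1, hm2⟩ := hφmono t s hst
        rw [abs_of_nonneg (by linarith), abs_of_nonneg (by linarith)]
        linarith
    have hφ0 : φ 0 = 0 := by
      have : E ∩ Set.Iic 0 = ∅ := by
        ext t
        simp only [Set.mem_inter_iff, Set.mem_Iic, Set.mem_empty_iff_false, iff_false,
          not_and, not_le]
        exact fun ht => (hEsub ht).1
      rw [hφdef]; simp only [this]; simp
    have hφπ : φ Real.pi = m := by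
      have : E ∩ Set.Iic Real.pi = E := by
        apply Set.inter_eq_self_of_subset_left
        exact fun t ht => le_of_lt (hEsub ht).2
      rw [hφdef]; simp only [this]
      exact hmdef.symm
    -- IVT
    obtain ⟨c, hcIcc, hφc⟩ : ∃ c ∈ Set.Icc (0:ℝ) Real.pi, φ c = m / 2 := by
      have hIVT := intermediate_value_Icc pi_pos.le hφlip.continuous.continuousOn
      have hmem : m / 2 ∈ Set.Icc (φ 0) (φ Real.pi) := by
        rw [hφ0, hφπ]
        constructor <;> linarith
      obtain ⟨c, hc, hφc⟩ := hIVT hmem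
      exact ⟨c, hc, hφc⟩
    set E₁ : Set ℝ := E ∩ Set.Iic c with hE₁def
    set E₂ : Set ℝ := E \ Set.Iic c with hE₂def
    have hE₁meas : MeasurableSet E₁ := hEmeas.inter measurableSet_Iic
    have hE₂meas : MeasurableSet E₂ := hEmeas.diff measurableSet_Iic
    have hE₁fin : volume E₁ ≠ ⊤ :=
      ((measure_mono Set.inter_subset_left).trans_lt hEfin.lt_top).ne
    have hE₂fin : volume E₂ ≠ ⊤ :=
      ((measure_mono Set.diff_subset).trans_lt hEfin.lt_top).ne
    have hE₁val : (volume E₁).toReal = m / 2 := hφc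
    have hE₂val : (volume E₂).toReal = m / 2 := by
      have hsplit : volume E₁ + volume E₂ = volume E :=
        measure_inter_add_diff E measurableSet_Iic
      have := congrArg ENNReal.toReal hsplit
      rw [ENNReal.toReal_add hE₁fin hE₂fin] at this
      rw [hE₁val] at this
      rw [← hmdef] at this
      linarith
    -- the perturbation
    set v : ℝ → ℝ := fun x =>
      ε * (E₁.indicator (fun _ => (1:ℝ)) x - E₂.indicator (fun _ => (1:ℝ)) x) with hvdef
    have hv_meas : Measurable v :=
      (measurable_const.mul
        (((measurable_const.indicator hE₁meas)).sub
          ((measurable_const.indicator hE₂meas))))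
    have hv_disj : ∀ x, x ∈ E₁ → x ∉ E₂ := fun x hx1 hx2 => hx2.2 hx1.2
    have hv_bd : ∀ x, |v x| ≤ ε := by
      intro x
      rw [hvdef]
      simp only [abs_mul, abs_of_pos hε]
      rcases Classical.em (x ∈ E₁) with hx1 | hx1 <;>
        rcases Classical.em (x ∈ E₂) with hx2 | hx2
      · exact absurd hx2 (hv_disj x hx1)
      · simp [Set.indicator_of_mem hx1, Set.indicator_of_notMem hx2]
      · simp [Set.indicator_of_notMem hx1, Set.indicator_of_mem hx2]
      · simp [Set.indicator_of_notMem hx1, Set.indicator_of_notMem hx2, hε.le]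
    have hv_zero : ∀ x, x ∉ E → v x = 0 := by
      intro x hx
      rw [hvdef]
      have h1 : x ∉ E₁ := fun hc => hx hc.1
      have h2 : x ∉ E₂ := fun hc => hx hc.1
      simp [Set.indicator_of_notMem h1, Set.indicator_of_notMem h2]
    have hv_int : ∀ a b : ℝ, IntervalIntegrable v volume a b :=
      bdd_intervalIntegrable hv_meas hv_bd
    set u : ℝ → ℝ := fun x => ∫ t in (0:ℝ)..x, v t with hudef
    have hu_sub : ∀ a b : ℝ, u b - u a = ∫ t in a..b, v t := by
      intro a b
      have := intervalIntegral.integral_add_adjacent_intervals (hv_int 0 a) (hv_int a b)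
      rw [hudef]; simp only []
      linarith
    have hvint_eq : ∀ a b : ℝ, a ≤ b → ∫ t in a..b, v t =
        ε * ((volume (E₁ ∩ Set.Ioc a b)).toReal - (volume (E₂ ∩ Set.Ioc a b)).toReal) := by
      intro a b hab
      rw [hvdef]
      simp only []
      rw [intervalIntegral.integral_const_mul]
      congr 1
      have hi1 : IntervalIntegrable (E₁.indicator fun _ => (1:ℝ)) volume a b := by
        apply bdd_intervalIntegrable (measurable_const.indicator hE₁meas) (C := 1)
        intro x
        rcases Classical.em (x ∈ E₁) with hx | hx <;>
          simp [Set.indicator_of_mem, Set.indicator_of_notMem, hx]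
      have hi2 : IntervalIntegrable (E₂.indicator fun _ => (1:ℝ)) volume a b := by
        apply bdd_intervalIntegrable (measurable_const.indicator hE₂meas) (C := 1)
        intro x
        rcases Classical.em (x ∈ E₂) with hx | hx <;>
          simp [Set.indicator_of_mem, Set.indicator_of_notMem, hx]
      rw [intervalIntegral.integral_sub hi1 hi2, ind_int hE₁meas hab, ind_int hE₂meas hab]
    have hu0 : u 0 = 0 := by
      rw [hudef]; simp
    have huπ : u Real.pi = 0 := by
      have h1 : E₁ ∩ Set.Ioc 0 Real.pi = E₁ := by
        apply Set.inter_eq_self_of_subset_left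
        intro t ht
        have := hEsub ht.1
        exact ⟨this.1, this.2.le⟩
      have h2 : E₂ ∩ Set.Ioc 0 Real.pi = E₂ := by
        apply Set.inter_eq_self_of_subset_left
        intro t ht
        have := hEsub ht.1
        exact ⟨this.1, this.2.le⟩
      have := hvint_eq 0 Real.pi pi_pos.le
      rw [h1, h2, hE₁val, hE₂val] at this
      rw [hudef]; simp only []
      rw [this]; ring
    have huc : u c = ε * (m / 2) := by
      have h1 : E₁ ∩ Set.Ioc 0 c = E₁ := by
        apply Set.inter_eq_self_of_subset_left
        intro t ht
        exact ⟨(hEsub ht.1).1, ht.2⟩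
      have h2 : E₂ ∩ Set.Ioc 0 c = ∅ := by
        ext t
        simp only [Set.mem_inter_iff, Set.mem_Ioc, Set.mem_empty_iff_false, iff_false,
          not_and, and_imp]
        intro ht h0t htc
        exact ht.2 htc
      have := hvint_eq 0 c hcIcc.1
      rw [h1, h2, hE₁val] at this
      rw [hudef]; simp only []
      rw [this]; simp
    have hucpos : 0 < u c := by
      rw [huc]; positivity
    -- the two competitors
    set f : ℝ → ℝ := fun x => H x + u x with hfdef
    set g : ℝ → ℝ := fun x => H x - u x with hgdef
    have hHd_int : ∀ a b : ℝ, IntervalIntegrable (deriv H) volume a b :=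
      bdd_intervalIntegrable (measurable_deriv H) hH1
    have hbd : ∀ (σ : ℝ) t, |σ| = 1 → |deriv H t + σ * v t| ≤ 1 := by
      intro σ t hσ
      rcases Classical.em (t ∈ E) with htE | htE
      · have h1 : |deriv H t| ≤ 1 - ε := htE.2
        have h2 : |σ * v t| ≤ ε := by
          rw [abs_mul, hσ, one_mul]; exact hv_bd t
        calc |deriv H t + σ * v t| ≤ |deriv H t| + |σ * v t| := abs_add_le _ _
          _ ≤ 1 := by linarith
      · rw [hv_zero t htE, mul_zero, add_zero]; exact hH1 t
    have hlipcore : ∀ (σ : ℝ), |σ| = 1 →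
        ∀ a b : ℝ, a ≤ b → |(H b + σ * u b) - (H a + σ * u a)| ≤ b - a := by
      intro σ hσ a b hab
      have hft : (H b + σ * u b) - (H a + σ * u a) =
          ∫ t in a..b, (deriv H t + σ * v t) := by
        rw [intervalIntegral.integral_add (hHd_int a b)
          ((hv_int a b).const_mul σ), lipschitz_ftc hH hab,
          intervalIntegral.integral_const_mul, ← hu_sub a b]
        ring
      rw [hft]
      have := intervalIntegral.norm_integral_le_of_norm_le_const
        (C := 1) (f := fun t => deriv H t + σ * v t) (a := a) (b := b)
        (fun t _ => by rw [Real.norm_eq_abs]; exact hbd σ t hσ)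
      rw [Real.norm_eq_abs] at this
      calc |(∫ t in a..b, (deriv H t + σ * v t))| ≤ 1 * |b - a| := this
        _ = b - a := by rw [one_mul, abs_of_nonneg (by linarith)]
    have hlipf : ∀ (σ : ℝ), |σ| = 1 → LipschitzWith 1 (fun x => H x + σ * u x) := by
      intro σ hσ
      rw [lipschitzWith_iff_dist_le_mul]
      intro s t
      rw [Real.dist_eq, Real.dist_eq, NNReal.coe_one, one_mul]
      rcases le_total s t with hst | hst
      · have h2 : |s - t| = t - s := by
          rw [abs_sub_comm]; exact abs_of_nonneg (by linarith)
        rw [h2, abs_sub_comm]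
        exact hlipcore σ hσ s t hst
      · have h2 : |s - t| = s - t := abs_of_nonneg (by linarith)
        rw [h2]
        exact hlipcore σ hσ t s hst
    have hf_lip : LipschitzWith 1 f := by
      have := hlipf 1 (by norm_num)
      simpa [hfdef] using this
    have hg_lip : LipschitzWith 1 g := by
      have := hlipf (-1) (by norm_num)
      have heq : (fun x => H x + (-1) * u x) = g := by
        funext x; rw [hgdef]; ring
      rwa [heq] at this
    have hH0 : H 0 = h 0 := (hHeq h0mem).symm
    have hHπ : H Real.pi = h Real.pi := (hHeq hπmem).symm
    have hf_mem : LipschitzOnWith 1 f (Set.Icc 0 Real.pi) ∧ f 0 + f Real.pi = Real.pi :=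
      ⟨hf_lip.lipschitzOnWith, by rw [hfdef]; simp only [hu0, huπ, hH0, hHπ]; linarith⟩
    have hg_mem : LipschitzOnWith 1 g (Set.Icc 0 Real.pi) ∧ g 0 + g Real.pi = Real.pi :=
      ⟨hg_lip.lipschitzOnWith, by rw [hgdef]; simp only [hu0, huπ, hH0, hHπ]; linarith⟩
    have hmid : ∀ x ∈ Set.Icc (0:ℝ) Real.pi, h x = (f x + g x) / 2 := by
      intro x hx
      rw [hfdef, hgdef]
      simp only []
      rw [hHeq hx]; ring
    have := hext f hf_mem g hg_mem hmid c hcIcc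
    rw [hfdef, hgdef] at this
    simp only [] at this
    linarith
  · -- a.e. |h'| = 1 → extreme point
    intro hae f hf g hg hmid x hx
    obtain ⟨F, hF, hFeq⟩ := hf.1.extend_real
    obtain ⟨G, hG, hGeq⟩ := hg.1.extend_real
    have hderiv_eq : ∀ᵐ t : ℝ, t ∈ Set.Ioo (0:ℝ) Real.pi → deriv F t = deriv G t := by
      filter_upwards [hae, hF.ae_differentiableAt, hG.ae_differentiableAt] with t h1 h2 h3 ht
      have htIcc : t ∈ Set.Icc (0:ℝ) Real.pi := Set.Ioo_subset_Icc_self ht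
      obtain ⟨d, hd, hd1⟩ := h1 htIcc
      have hnhds : Set.Icc (0:ℝ) Real.pi ∈ nhds t := Icc_mem_nhds ht.1 ht.2
      have hdh : HasDerivAt h d t := hd.hasDerivAt hnhds
      have hmid' : (fun y => (F y + G y)/2) =ᶠ[nhds t] h := by
        filter_upwards [hnhds] with y hy
        rw [hmid y hy, hFeq hy, hGeq hy]
      have hdh2 : HasDerivAt (fun y => (F y + G y)/2) d t :=
        hdh.congr_of_eventuallyEq hmid'
      have hdFG : HasDerivAt (fun y => (F y + G y)/2) ((deriv F t + deriv G t)/2) t :=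
        (h2.hasDerivAt.add h3.hasDerivAt).div_const 2
      have hd_eq : d = (deriv F t + deriv G t)/2 := hdh2.unique hdFG
      exact abs_half_eq (by simpa using norm_deriv_le_of_lipschitz hF)
        (by simpa using norm_deriv_le_of_lipschitz hG) hd1 hd_eq
    have hneπ : ∀ᵐ t : ℝ, t ≠ Real.pi := by
      rw [ae_iff]; simpa using Real.volume_singleton
    have key : ∀ y ∈ Set.Icc (0:ℝ) Real.pi, F y - F 0 = G y - G 0 := by
      intro y hy
      rw [← lipschitz_ftc hF hy.1, ← lipschitz_ftc hG hy.1]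
      apply intervalIntegral.integral_congr_ae
      have hsub : Set.uIoc (0:ℝ) y = Set.Ioc 0 y := Set.uIoc_of_le hy.1
      filter_upwards [hderiv_eq, hneπ] with t h1 h2 ht
      rw [hsub] at ht
      exact h1 ⟨ht.1, lt_of_le_of_ne (ht.2.trans hy.2) h2⟩
    have keyπ := key Real.pi hπmem
    have keyx := key x hx
    have e1 : F 0 = f 0 := (hFeq h0mem).symm
    have e2 : F Real.pi = f Real.pi := (hFeq hπmem).symm
    have e3 : G 0 = g 0 := (hGeq h0mem).symm
    have e4 : G Real.pi = g Real.pi := (hGeq hπmem).symm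
    have e5 : F x = f x := (hFeq hx).symm
    have e6 : G x = g x := (hGeq hx).symm
    have hfs := hf.2
    have hgs := hg.2
    rw [e1, e2, e3, e4] at keyπ
    rw [e1, e3, e5, e6] at keyx
    linarith


/-- A function `h ∈ F(S¹)` is an extreme point of `F(S¹)` (it is not the midpoint of two
distinct elements of `F(S¹)`) if and only if, for almost every `x ∈ [0,π]`,
`h` is differentiable at `x` with `|h'(x)| = 1`. -/
theorem extremePoint_FS1_iff (h : ℝ → ℝ) (hh : h ∈ FS1) :
    (∀ f ∈ FS1, ∀ g ∈ FS1,
      (∀ x ∈ Set.Icc (0 : ℝ) Real.pi, h x = (f x + g x) / 2) →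
      ∀ x ∈ Set.Icc (0 : ℝ) Real.pi, f x = g x) ↔
    (∀ᵐ x ∂volume, x ∈ Set.Icc (0 : ℝ) Real.pi →
      ∃ d : ℝ, HasDerivWithinAt h d (Set.Icc (0 : ℝ) Real.pi) x ∧ |d| = 1) := by
  exact extremePoint_FS1_iff' h hh
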